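/- arXiv:1809.07459 — 4 statements merged into one kernel-verified Lean document; each statement's English description precedes it below -/
import Mathlib

section
/- For any positive integers k and m, the function n ↦ p(n,k) is eventually-everywhere periodic modulo m: there exists a positive integer L such that p(n + L, k) ≡ p(n, k) (mod m) for all natural numbers n. -/
/-- `p n k` is the number of partitions of `n` into parts each of size at most `k`
(with `p 0 k = 1`). -/
def p (n k : ℕ) : ℕ :=
  (Finset.univ.filter (fun P : n.Partition => ∀ i ∈ P.parts, i ≤ k)).card

lemma p_one (n : ℕ) : p n 1 = 1 := by
  unfold p
  rw [Finset.card_eq_one]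
  refine ⟨⟨Multiset.replicate n 1, fun h => by simp [Multiset.eq_of_mem_replicate h], by simp⟩, ?_⟩
  ext P
  simp only [Finset.mem_filter, Finset.mem_univ, true_and, Finset.mem_singleton]
  constructor
  · intro h
    ext : 1
    have : P.parts = Multiset.replicate (Multiset.card P.parts) 1 := by
      rw [Multiset.eq_replicate]
      exact ⟨rfl, fun i hi => le_antisymm (h i hi) (P.parts_pos hi)⟩
    have hs := P.parts_sum
    rw [this] at hs ⊢
    simp at hs
    simp [hs]
  · rintro rfl
    intro i hi
    simp [Multiset.eq_of_mem_replicate hi]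

/-- Remove one part equal to `k+1`. -/
def shrink {n k : ℕ} (P : (n + (k+1)).Partition) (hP : (k+1) ∈ P.parts) : n.Partition where
  parts := P.parts.erase (k+1)
  parts_pos := fun hi => P.parts_pos (Multiset.mem_of_mem_erase hi)
  parts_sum := by
    have h := Multiset.cons_erase hP
    have h2 : ((k+1) ::ₘ P.parts.erase (k+1)).sum = n + (k+1) := by rw [h, P.parts_sum]
    rw [Multiset.sum_cons] at h2
    omega

/-- Add one part equal to `k+1`. -/
def grow {n k : ℕ} (Q : n.Partition) : (n + (k+1)).Partition where
  parts := (k+1) ::ₘ Q.parts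
  parts_pos := fun hi => by
    rcases Multiset.mem_cons.1 hi with h | h
    · omega
    · exact Q.parts_pos h
  parts_sum := by rw [Multiset.sum_cons, Q.parts_sum]; omega

lemma p_mem_card (n k : ℕ) :
    (Finset.univ.filter fun P : (n+(k+1)).Partition =>
      (∀ i ∈ P.parts, i ≤ k+1) ∧ (k+1) ∈ P.parts).card = p n (k+1) := by

  unfold p
  refine Finset.card_bij' (fun P hP => shrink P ((Finset.mem_filter.1 hP).2.2))
    (fun Q _ => grow Q) ?_ ?_ ?_ ?_
  · intro P hP
    simp only [Finset.mem_filter, Finset.mem_univ, true_and] at hP ⊢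
    intro i hi
    exact hP.1 i (Multiset.mem_of_mem_erase hi)
  · intro Q hQ
    simp only [Finset.mem_filter, Finset.mem_univ, true_and] at hQ ⊢
    constructor
    · intro i hi
      rcases Multiset.mem_cons.1 hi with h | h
      · omega
      · exact hQ i h
    · exact Multiset.mem_cons_self _ _
  · intro P hP
    apply Nat.Partition.ext
    exact Multiset.cons_erase (Finset.mem_filter.1 hP).2.2
  · intro Q hQ
    apply Nat.Partition.ext
    exact Multiset.erase_cons_head _ _

lemma p_rec (n k : ℕ) :
    p (n + (k+1)) (k+1) = p (n + (k+1)) k + p n (k+1) := by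

  have hsplit := Finset.card_filter_add_card_filter_not
    (s := Finset.univ.filter (fun P : (n + (k+1)).Partition => ∀ i ∈ P.parts, i ≤ k+1))
    (p := fun P => (k+1) ∈ P.parts)
  rw [Finset.filter_filter, Finset.filter_filter] at hsplit
  have h1 : (Finset.univ.filter fun P : (n+(k+1)).Partition =>
      (∀ i ∈ P.parts, i ≤ k+1) ∧ (k+1) ∉ P.parts)
      = (Finset.univ.filter fun P : (n+(k+1)).Partition => ∀ i ∈ P.parts, i ≤ k) := by
    ext P
    simp only [Finset.mem_filter, Finset.mem_univ, true_and]
    constructor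
    · rintro ⟨h, hnot⟩ i hi
      have := h i hi
      rcases Nat.lt_or_ge i (k+1) with h' | h'
      · omega
      · exact absurd (by omega : i = k+1) (fun e => hnot (e ▸ hi))
    · intro h
      refine ⟨fun i hi => Nat.le_succ_of_le (h i hi), fun hmem => by have := h _ hmem; omega⟩
  rw [h1, p_mem_card] at hsplit
  unfold p at hsplit ⊢
  omega

lemma p_sum (k t n : ℕ) :
    p (n + t*(k+1)) (k+1)
      = p n (k+1) + ∑ i ∈ Finset.range t, p (n + (i+1)*(k+1)) k := by
  induction t with
  | zero => simp
  | succ t ih =>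
    have e : n + (t+1)*(k+1) = (n + t*(k+1)) + (k+1) := by ring
    rw [e, p_rec, ih, Finset.sum_range_succ, ← e]
    omega

lemma modEq_sum (m t : ℕ) (f g : ℕ → ℕ) (h : ∀ i < t, f i ≡ g i [MOD m]) :
    (∑ i ∈ Finset.range t, f i) ≡ ∑ i ∈ Finset.range t, g i [MOD m] := by
  induction t with
  | zero => rfl
  | succ t ih =>
    rw [Finset.sum_range_succ, Finset.sum_range_succ]
    exact (ih fun i hi => h i (by omega)).add (h t (by omega))

lemma aux (m : ℕ) (hm : 0 < m) : ∀ k, ∃ L : ℕ, 0 < L ∧ ∀ n : ℕ, p (n + L) (k+1) ≡ p n (k+1) [MOD m] := by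
  intro k
  induction k with
  | zero => exact ⟨1, one_pos, fun n => by rw [p_one, p_one]⟩
  | succ k ih =>
    obtain ⟨L', hL', hper⟩ := ih
    have hper' : ∀ u n, p (n + u*L') (k+1) ≡ p n (k+1) [MOD m] := by
      intro u
      induction u with
      | zero => simp [Nat.ModEq.refl]
      | succ u ih2 =>
        intro n
        have e : n + (u+1)*L' = (n + u*L') + L' := by ring
        rw [e]
        exact (hper _).trans (ih2 n)
    have hS : ∀ s n, (∑ i ∈ Finset.range L', p (n + s*(L'*(k+2)) + (i+1)*(k+2)) (k+1))
        ≡ ∑ i ∈ Finset.range L', p (n + (i+1)*(k+2)) (k+1) [MOD m] := by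
      intro s n
      apply modEq_sum
      intro i _
      have e : n + s*(L'*(k+2)) + (i+1)*(k+2) = (n + (i+1)*(k+2)) + (s*(k+2))*L' := by
        ring
      rw [e]
      exact hper' _ _
    have key : ∀ s n, p (n + s*(L'*(k+2))) (k+2)
        ≡ p n (k+2) + s * (∑ i ∈ Finset.range L', p (n + (i+1)*(k+2)) (k+1)) [MOD m] := by
      intro s
      induction s with
      | zero => simp [Nat.ModEq.refl]
      | succ s ihs =>
        intro n
        have e : n + (s+1)*(L'*(k+2)) = (n + s*(L'*(k+2))) + L'*(k+2) := by ring
        have e2 : p n (k+2) + (s+1) * (∑ i ∈ Finset.range L', p (n + (i+1)*(k+2)) (k+1))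
            = (p n (k+2) + s * (∑ i ∈ Finset.range L', p (n + (i+1)*(k+2)) (k+1)))
              + (∑ i ∈ Finset.range L', p (n + (i+1)*(k+2)) (k+1)) := by ring
        have hb := p_sum (k+1) L' (n + s*(L'*(k+2)))
        have e3 : ∀ i : ℕ, n + s*(L'*(k+2)) + (i+1)*(k+2)
            = n + s*(L'*(k+2)) + (i+1)*(k+2) := fun _ => rfl
        rw [e, e2, hb]
        exact (ihs n).add (hS s n)
    refine ⟨m * (L'*(k+2)), by positivity, fun n => ?_⟩
    have h1 := key m n
    have h2 : p n (k+2) + m * (∑ i ∈ Finset.range L', p (n + (i+1)*(k+2)) (k+1))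
        ≡ p n (k+2) + 0 [MOD m] :=
      Nat.ModEq.add_left _ (Nat.modEq_zero_iff_dvd.2 ⟨_, rfl⟩)
    simpa using h1.trans h2


theorem stmt_0 (k m : ℕ) (hk : 0 < k) (hm : 0 < m) :
    ∃ L : ℕ, 0 < L ∧ ∀ n : ℕ, p (n + L) k ≡ p n k [MOD m] := by
  obtain ⟨k, rfl⟩ := Nat.exists_eq_succ_of_ne_zero hk.ne'
  exact aux m hm k
end

section
/- For every positive integer k, the odd density of p(·,k) exists: the sequence N ↦ #{n ≤ N : p(n,k) is odd}/N converges as N → ∞. -/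
open Finset Filter PowerSeries



lemma p_zero (n : ℕ) : p n 0 = if n = 0 then 1 else 0 := by
  unfold p
  split_ifs with h
  · subst h
    rw [Finset.card_eq_one]
    refine ⟨default, ?_⟩
    rw [Finset.eq_singleton_iff_unique_mem]
    constructor
    · simp
    · intro x _; exact Subsingleton.elim x default
  · rw [Finset.card_eq_zero, Finset.filter_eq_empty_iff]
    intro P _
    simp only [not_forall]
    have hne : P.parts ≠ 0 := by
      intro h0
      exact h (by simpa [h0] using P.parts_sum.symm)
    obtain ⟨i, hi⟩ := Multiset.exists_mem_of_ne_zero hne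
    exact ⟨i, hi, by have := P.parts_pos hi; omega⟩

lemma p_succ_lt (n k : ℕ) (h : n < k + 1) : p n (k + 1) = p n k := by
  unfold p
  congr 1
  apply Finset.filter_congr
  intro P _
  constructor
  · intro hP i hi
    have h1 : i ≤ n := by
      simpa [P.parts_sum] using Multiset.le_sum_of_mem hi
    omega
  · intro hP i hi
    exact (hP i hi).trans (by omega)




lemma p_succ_le (n k : ℕ) (h : k + 1 ≤ n) :
    p n (k + 1) = p n k + p (n - (k + 1)) (k + 1) := by
  classical
  have key : p n (k+1) =
      ((Finset.univ.filter (fun P : n.Partition => (∀ i ∈ P.parts, i ≤ k + 1) ∧ (k+1) ∉ P.parts)).card)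
      + ((Finset.univ.filter (fun P : n.Partition => (∀ i ∈ P.parts, i ≤ k + 1) ∧ (k+1) ∈ P.parts)).card) := by
    unfold p
    rw [← Finset.card_filter_add_card_filter_not
      (p := fun P : n.Partition => (k+1) ∉ P.parts), Finset.filter_filter, Finset.filter_filter]
    congr 2
    · ext P; simp only [Finset.mem_filter]; tauto
  rw [key]
  congr 1
  · -- no part equal to k+1 : same as parts ≤ k
    unfold p
    congr 1
    apply Finset.filter_congr
    intro P _
    constructor
    · rintro ⟨h1, h2⟩ i hi
      have := h1 i hi
      have : i ≠ k + 1 := fun he => h2 (he ▸ hi)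
      omega
    · intro hP
      refine ⟨fun i hi => (hP i hi).trans (by omega), fun hmem => by have := hP _ hmem; omega⟩
  · -- parts containing k+1 biject with partitions of n - (k+1)
    unfold p
    refine Finset.card_bij'
      (fun P hP => ⟨P.parts.erase (k+1), ?_, ?_⟩)
      (fun Q hQ => ⟨(k+1) ::ₘ Q.parts, ?_, ?_⟩) ?_ ?_ ?_ ?_
    · intro i hi
      exact P.parts_pos (Multiset.mem_of_mem_erase hi)
    · simp only [Finset.mem_filter] at hP
      have := Multiset.cons_erase hP.2.2
      have hs : ((k+1) ::ₘ P.parts.erase (k+1)).sum = n := by rw [this, P.parts_sum]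
      simp only [Multiset.sum_cons] at hs
      omega
    · intro i hi
      rcases Multiset.mem_cons.1 hi with rfl | hi
      · omega
      · exact Q.parts_pos hi
    · simp only [Multiset.sum_cons, Q.parts_sum]
      omega
    · intro P hP
      simp only [Finset.mem_filter, Finset.mem_univ, true_and] at hP ⊢
      intro i hi
      exact hP.1 i (Multiset.mem_of_mem_erase hi)
    · intro Q hQ
      simp only [Finset.mem_filter, Finset.mem_univ, true_and] at hQ ⊢
      refine ⟨?_, Multiset.mem_cons_self _ _⟩
      intro i hi
      rcases Multiset.mem_cons.1 hi with rfl | hi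
      · omega
      · exact hQ i hi
    · intro P hP
      simp only [Finset.mem_filter, Finset.mem_univ, true_and] at hP
      apply Nat.Partition.ext
      simp [Multiset.cons_erase hP.2]
    · intro Q hQ
      apply Nat.Partition.ext
      simp [Multiset.erase_cons_head]




noncomputable def QP (k : ℕ) : Polynomial (ZMod 2) :=
  ∏ i ∈ Finset.range k, (1 - Polynomial.X ^ (i + 1))

noncomputable def FS (k : ℕ) : PowerSeries (ZMod 2) :=
  PowerSeries.mk fun n => (p n k : ZMod 2)

lemma step_identity (k : ℕ) :
    (1 - (PowerSeries.X : PowerSeries (ZMod 2)) ^ (k + 1)) * FS (k + 1) = FS k := by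
  ext n
  rw [sub_mul, one_mul, map_sub, PowerSeries.coeff_X_pow_mul']
  simp only [FS, PowerSeries.coeff_mk]
  split_ifs with hle
  · rw [p_succ_le n k hle]
    push_cast
    ring
  · rw [p_succ_lt n k (by omega)]
    simp

lemma gf (k : ℕ) : ((QP k : Polynomial (ZMod 2)) : PowerSeries (ZMod 2)) * FS k = 1 := by
  induction k with
  | zero =>
    simp only [QP, Finset.range_zero, Finset.prod_empty, Polynomial.coe_one, one_mul]
    ext n
    simp only [FS, PowerSeries.coeff_mk, PowerSeries.coeff_one, p_zero]
    split_ifs <;> simp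
  | succ k ih =>
    have hQ : ((QP (k+1) : Polynomial (ZMod 2)) : PowerSeries (ZMod 2))
        = (QP k : PowerSeries (ZMod 2)) * (1 - PowerSeries.X ^ (k + 1)) := by
      rw [QP, Finset.prod_range_succ, Polynomial.coe_mul]
      congr 1
      push_cast
      simp
    rw [hQ, mul_assoc, step_identity k, ih]






def mm (k : ℕ) : ℕ := ∑ i ∈ Finset.range k, (i + 1)

lemma QP_coeff_zero (k : ℕ) : (QP k).coeff 0 = 1 := by
  simp [QP, Polynomial.coeff_zero_eq_eval_zero, Polynomial.eval_prod]

lemma QP_natDegree_le (k : ℕ) : (QP k).natDegree ≤ mm k := by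
  refine (Polynomial.natDegree_prod_le _ _).trans ?_
  apply Finset.sum_le_sum
  intro i _
  refine (Polynomial.natDegree_sub_le _ _).trans ?_
  simp

lemma QP_coeff_eq_zero {k d : ℕ} (hd : mm k < d) : (QP k).coeff d = 0 :=
  Polynomial.coeff_eq_zero_of_natDegree_lt (lt_of_le_of_lt (QP_natDegree_le k) hd)

lemma rec_mod2 (k n : ℕ) (hn : 1 ≤ n) :
    (p n k : ZMod 2) = ∑ d ∈ Finset.Icc 1 n, (QP k).coeff d * (p (n - d) k : ZMod 2) := by
  have h := congrArg (PowerSeries.coeff (R := ZMod 2) n) (gf k)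
  rw [PowerSeries.coeff_mul, PowerSeries.coeff_one, if_neg (by omega)] at h
  rw [Finset.Nat.sum_antidiagonal_eq_sum_range_succ_mk] at h
  have hsplit : Finset.range (n + 1) = insert 0 (Finset.Icc 1 n) := by
    ext x
    simp only [Finset.mem_range, Finset.mem_insert, Finset.mem_Icc]
    omega
  rw [hsplit, Finset.sum_insert (by simp)] at h
  simp only [Polynomial.coeff_coe, FS, PowerSeries.coeff_mk, QP_coeff_zero, one_mul,
    Nat.sub_zero] at h
  have := add_eq_zero_iff_eq_neg.mp h
  rw [this, CharTwo.neg_eq]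

lemma rec_mod2' (k n : ℕ) (hn : mm k ≤ n) (hn1 : 1 ≤ n) :
    (p n k : ZMod 2) = ∑ d ∈ Finset.Icc 1 (mm k), (QP k).coeff d * (p (n - d) k : ZMod 2) := by
  rw [rec_mod2 k n hn1]
  symm
  apply Finset.sum_subset
  · intro d hd
    simp only [Finset.mem_Icc] at hd ⊢
    omega
  · intro d hd hd'
    simp only [Finset.mem_Icc] at hd hd'
    rw [QP_coeff_eq_zero (by omega), zero_mul]



lemma eventually_periodic_of_rec {M : ℕ} (q : ℕ → ZMod 2) (a : ℕ → ZMod 2)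
    (ha : ∀ n, M + 1 ≤ n → a n = ∑ d ∈ Finset.Icc 1 (M + 1), q d * a (n - d)) :
    ∃ T, 0 < T ∧ ∃ n0, ∀ n, n0 ≤ n → a (n + T) = a n := by
  classical
  set step : (Fin (M + 1) → ZMod 2) → (Fin (M + 1) → ZMod 2) := fun v i =>
    if h : (i : ℕ) + 1 < M + 1 then v ⟨(i : ℕ) + 1, h⟩
    else ∑ d ∈ Finset.Icc 1 (M + 1), q d * v ⟨M - (d - 1), Nat.lt_succ_of_le (Nat.sub_le _ _)⟩
    with hstep_def
  set s : ℕ → (Fin (M + 1) → ZMod 2) := fun t i => a (t + (i : ℕ)) with hs_def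
  have hstep : ∀ t, s (t + 1) = step (s t) := by
    intro t
    funext i
    rw [hstep_def]
    simp only
    split_ifs with h
    · show a (t + 1 + (i : ℕ)) = a (t + ((i : ℕ) + 1))
      congr 1; omega
    · have hi : (i : ℕ) = M := by omega
      show a (t + 1 + (i : ℕ)) = _
      rw [hi]
      have h1 : t + 1 + M = t + M + 1 := by omega
      rw [h1, ha (t + M + 1) (by omega)]
      apply Finset.sum_congr rfl
      intro d hd
      simp only [Finset.mem_Icc] at hd
      congr 2
      show t + M + 1 - d = t + (M - (d - 1))
      omega
  have hex : ∃ x y, x ≠ y ∧ s x = s y := by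
    have := Finite.exists_ne_map_eq_of_infinite s
    obtain ⟨x, y, hxy, hs⟩ := this
    exact ⟨x, y, hxy, hs⟩
  obtain ⟨x, y, hxy, hs⟩ := hex
  wlog hlt : x < y generalizing x y
  · exact this y x hxy.symm hs.symm (by omega)
  have hshift : ∀ u, s (x + u) = s (y + u) := by
    intro u
    induction u with
    | zero => simpa using hs
    | succ u ih =>
      have h1 : x + (u + 1) = (x + u) + 1 := by omega
      have h2 : y + (u + 1) = (y + u) + 1 := by omega
      rw [h1, h2, hstep, hstep, ih]
  refine ⟨y - x, by omega, x, fun n hn => ?_⟩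
  have e1 : a (n + (y - x)) = s (y + (n - x)) ⟨0, by omega⟩ := by
    simp only [hs_def]
    congr 1
    omega
  have e2 : a n = s (x + (n - x)) ⟨0, by omega⟩ := by
    simp only [hs_def]
    congr 1
    omega
  rw [e1, e2, hshift]



section Density

variable (P : ℕ → Prop) [DecidablePred P]

lemma count_add_period (T : ℕ) (hP : ∀ n, P (n + T) ↔ P n) (N : ℕ) :
    ((Finset.range (N + T)).filter P).card
      = ((Finset.range T).filter P).card + ((Finset.range N).filter P).card := by
  classical
  have hsplit : Finset.range (N + T) = Finset.range T ∪ Finset.Ico T (N + T) := by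
    rw [Finset.range_eq_Ico, Finset.range_eq_Ico]
    exact (Finset.Ico_union_Ico_eq_Ico (a := 0) (b := T) (c := N + T) (by omega) (by omega)).symm
  rw [hsplit, Finset.filter_union, Finset.card_union_of_disjoint]
  · congr 1
    refine (Finset.card_bij' (fun n _ => n + T) (fun n _ => n - T) ?_ ?_ ?_ ?_).symm
    · intro n hn
      simp only [Finset.mem_filter, Finset.mem_range, Finset.mem_Ico] at hn ⊢
      exact ⟨by omega, (hP n).mpr hn.2⟩
    · intro n hn
      simp only [Finset.mem_filter, Finset.mem_range, Finset.mem_Ico] at hn ⊢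
      obtain ⟨⟨h1, h2⟩, h3⟩ := hn
      refine ⟨by omega, ?_⟩
      have : n - T + T = n := by omega
      exact (hP (n - T)).mp (by rwa [this])
    · intro n _
      show n + T - T = n
      omega
    · intro n hn
      simp only [Finset.mem_filter, Finset.mem_Ico] at hn
      show n - T + T = n
      omega
  · apply Finset.disjoint_filter_filter
    rw [Finset.range_eq_Ico]
    exact Finset.Ico_disjoint_Ico_consecutive 0 T (N + T)

lemma count_formula (T : ℕ) (hP : ∀ n, P (n + T) ↔ P n) (Q r : ℕ) :
    ((Finset.range (Q * T + r)).filter P).card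
      = Q * ((Finset.range T).filter P).card + ((Finset.range r).filter P).card := by
  induction Q with
  | zero => simp
  | succ Q ih =>
    have h1 : (Q + 1) * T + r = (Q * T + r) + T := by ring
    rw [h1, count_add_period P T hP, ih]
    ring

lemma count_est (T : ℕ) (hT : 0 < T) (hP : ∀ n, P (n + T) ↔ P n) (N : ℕ) :
    |((((Finset.range N).filter P).card : ℝ))
      - (((Finset.range T).filter P).card : ℝ) / T * N| ≤ T := by
  set c := ((Finset.range T).filter P).card with hc
  have hNsplit : (N / T) * T + N % T = N := by
    exact Nat.div_add_mod' N T
  have hcount : ((Finset.range N).filter P).card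
      = (N / T) * c + ((Finset.range (N % T)).filter P).card := by
    conv_lhs => rw [← hNsplit]
    exact count_formula P T hP (N / T) (N % T)
  have hcle : c ≤ T := by
    rw [hc]
    calc ((Finset.range T).filter P).card ≤ (Finset.range T).card := Finset.card_filter_le _ _
    _ = T := Finset.card_range T
  have hrlt : N % T < T := Nat.mod_lt _ hT
  have hFr : ((Finset.range (N % T)).filter P).card ≤ N % T := by
    calc ((Finset.range (N % T)).filter P).card ≤ (Finset.range (N % T)).card :=
      Finset.card_filter_le _ _
    _ = N % T := Finset.card_range _
  have hT0 : (T : ℝ) ≠ 0 := by positivity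
  -- real computation
  have e1 : (((Finset.range N).filter P).card : ℝ)
      = (N / T : ℕ) * c + (((Finset.range (N % T)).filter P).card : ℝ) := by
    rw [hcount]; push_cast; ring
  have e2 : (N : ℝ) = T * (N / T : ℕ) + (N % T : ℕ) := by
    conv_lhs => rw [← hNsplit]
    push_cast; ring
  rw [e1, e2]
  have expand : (N / T : ℕ) * (c : ℝ) + (((Finset.range (N % T)).filter P).card : ℝ)
      - (c : ℝ) / T * ((T : ℝ) * (N / T : ℕ) + (N % T : ℕ))
      = (((Finset.range (N % T)).filter P).card : ℝ) - (c : ℝ) / T * (N % T : ℕ) := by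
    field_simp
    ring
  rw [expand]
  have h1 : (0 : ℝ) ≤ (c : ℝ) / T * (N % T : ℕ) := by positivity
  have h2 : (c : ℝ) / T * (N % T : ℕ) ≤ (N % T : ℕ) := by
    have : (c : ℝ) / T ≤ 1 := by
      rw [div_le_one (by positivity)]
      exact_mod_cast hcle
    nlinarith [(by positivity : (0:ℝ) ≤ ((N % T : ℕ) : ℝ))]
  have h3 : (((Finset.range (N % T)).filter P).card : ℝ) ≤ (N % T : ℕ) := by exact_mod_cast hFr
  have h4 : ((N % T : ℕ) : ℝ) ≤ T := by exact_mod_cast hrlt.le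
  rw [abs_le]
  have h5 : (0:ℝ) ≤ (((Finset.range (N % T)).filter P).card : ℝ) := by positivity
  constructor <;> linarith

end Density



lemma density_exists (P : ℕ → Prop) [DecidablePred P] (T n0 : ℕ) (hT : 0 < T)
    (hP : ∀ n, n0 ≤ n → (P (n + T) ↔ P n)) :
    ∃ d : ℝ, Tendsto (fun N : ℕ =>
      (((Finset.range (N + 1)).filter P).card : ℝ) / N) atTop (nhds d) := by
  classical
  set P' : ℕ → Prop := fun n => P (n + T * n0) with hP'def
  haveI : DecidablePred P' := fun n => inferInstanceAs (Decidable (P (n + T * n0)))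
  have hn0le : ∀ n : ℕ, n0 ≤ n + T * n0 := by
    intro n
    have := Nat.le_mul_of_pos_left n0 hT
    omega
  have hper : ∀ n, P' (n + T) ↔ P' n := by
    intro n
    have h1 : n + T + T * n0 = (n + T * n0) + T := by ring
    show P (n + T + T * n0) ↔ P (n + T * n0)
    rw [h1]
    exact hP _ (hn0le n)
  have haux : ∀ j n, n0 ≤ n → (P (n + T * j) ↔ P n) := by
    intro j
    induction j with
    | zero => simp
    | succ j ih =>
      intro n hn
      have h1 : n + T * (j + 1) = (n + T * j) + T := by ring
      rw [h1, hP _ (by omega)]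
      exact ih n hn
  have hagree : ∀ n, n0 ≤ n → (P' n ↔ P n) := fun n hn => haux n0 n hn
  -- counts differ by at most n0
  have hsub : ∀ N, ((Finset.range N).filter P).card ≤ ((Finset.range N).filter P').card + n0 := by
    intro N
    have hss : (Finset.range N).filter P ⊆ ((Finset.range N).filter P') ∪ Finset.range n0 := by
      intro x hx
      simp only [Finset.mem_filter, Finset.mem_range, Finset.mem_union] at hx ⊢
      by_cases hx0 : n0 ≤ x
      · exact Or.inl ⟨hx.1, (hagree x hx0).mpr hx.2⟩
      · exact Or.inr (by omega)
    calc ((Finset.range N).filter P).card ≤ _ := Finset.card_le_card hss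
      _ ≤ ((Finset.range N).filter P').card + (Finset.range n0).card := Finset.card_union_le _ _
      _ = ((Finset.range N).filter P').card + n0 := by rw [Finset.card_range]
  have hsub' : ∀ N, ((Finset.range N).filter P').card ≤ ((Finset.range N).filter P).card + n0 := by
    intro N
    have hss : (Finset.range N).filter P' ⊆ ((Finset.range N).filter P) ∪ Finset.range n0 := by
      intro x hx
      simp only [Finset.mem_filter, Finset.mem_range, Finset.mem_union] at hx ⊢
      by_cases hx0 : n0 ≤ x
      · exact Or.inl ⟨hx.1, (hagree x hx0).mp hx.2⟩
      · exact Or.inr (by omega)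
    calc ((Finset.range N).filter P').card ≤ _ := Finset.card_le_card hss
      _ ≤ ((Finset.range N).filter P).card + (Finset.range n0).card := Finset.card_union_le _ _
      _ = ((Finset.range N).filter P).card + n0 := by rw [Finset.card_range]
  set c : ℕ := ((Finset.range T).filter P').card with hc
  set d : ℝ := (c : ℝ) / T with hd
  have hd1 : d ≤ 1 := by
    rw [hd, div_le_one (by positivity)]
    have : c ≤ T := le_trans (Finset.card_filter_le _ _) (by rw [Finset.card_range])
    exact_mod_cast this
  have hd0 : 0 ≤ d := by positivity
  set C : ℝ := (T : ℝ) + n0 + 1 with hC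
  have key : ∀ N : ℕ, 1 ≤ N →
      |(((Finset.range (N + 1)).filter P).card : ℝ) / N - d| ≤ C / N := by
    intro N hN
    have hNpos : (0 : ℝ) < N := by exact_mod_cast hN
    have est := count_est P' T hT hper (N + 1)
    have hdiffN : |(((Finset.range (N + 1)).filter P).card : ℝ)
        - (((Finset.range (N + 1)).filter P').card : ℝ)| ≤ n0 := by
      have h1 := hsub (N + 1)
      have h2 := hsub' (N + 1)
      rw [abs_le]
      constructor
      · have := (Nat.cast_le (α := ℝ)).mpr h2
        push_cast at this ⊢
        linarith
      · have := (Nat.cast_le (α := ℝ)).mpr h1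
        push_cast at this ⊢
        linarith
    have hnum : |(((Finset.range (N + 1)).filter P).card : ℝ) - d * N| ≤ C := by
      have e1 : (((Finset.range (N + 1)).filter P).card : ℝ) - d * N
          = ((((Finset.range (N + 1)).filter P).card : ℝ)
              - (((Finset.range (N + 1)).filter P').card : ℝ))
            + (((((Finset.range (N + 1)).filter P').card : ℝ) - d * (N + 1)) + d) := by
        ring
      rw [e1, hC]
      have est' : |(((Finset.range (N + 1)).filter P').card : ℝ) - d * (N + 1)| ≤ T := by
        have : d * ((N : ℝ) + 1) = (c : ℝ) / T * ((N + 1 : ℕ) : ℝ) := by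
          rw [hd]; push_cast; ring
        rw [this]
        exact est
      calc _ ≤ |(((Finset.range (N + 1)).filter P).card : ℝ)
              - (((Finset.range (N + 1)).filter P').card : ℝ)|
            + |((((Finset.range (N + 1)).filter P').card : ℝ) - d * (N + 1)) + d| :=
          abs_add_le _ _
        _ ≤ |(((Finset.range (N + 1)).filter P).card : ℝ)
              - (((Finset.range (N + 1)).filter P').card : ℝ)|
            + (|(((Finset.range (N + 1)).filter P').card : ℝ) - d * (N + 1)| + |d|) := by
          gcongr
          exact abs_add_le _ _
        _ ≤ (n0 : ℝ) + ((T : ℝ) + 1) := by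
          rw [abs_of_nonneg hd0]
          gcongr
        _ = (T : ℝ) + n0 + 1 := by ring
    have : (((Finset.range (N + 1)).filter P).card : ℝ) / N - d
        = ((((Finset.range (N + 1)).filter P).card : ℝ) - d * N) / N := by
      field_simp
    rw [this, abs_div, abs_of_pos hNpos]
    gcongr
  have h0 : Tendsto (fun N : ℕ => (((Finset.range (N + 1)).filter P).card : ℝ) / N - d)
      atTop (nhds 0) := by
    apply squeeze_zero_norm' (a := fun N : ℕ => C / N)
    · filter_upwards [eventually_ge_atTop 1] with N hN
      rw [Real.norm_eq_abs]
      exact key N hN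
    · exact tendsto_const_div_atTop_nhds_zero_nat C
  refine ⟨d, ?_⟩
  have h1 := h0.add_const d
  simpa using h1

theorem stmt_5 (k : ℕ) (hk : 0 < k) :
    ∃ d : ℝ, Filter.Tendsto
      (fun N : ℕ =>
        (((Finset.range (N + 1)).filter (fun n => Odd (p n k))).card : ℝ) / N)
      Filter.atTop (nhds d) := by
  have hmm : 1 ≤ mm k := by
    have hsub : Finset.range 1 ⊆ Finset.range k := by
      intro x hx
      simp only [Finset.mem_range] at hx ⊢
      omega
    calc (1 : ℕ) = ∑ i ∈ Finset.range 1, (i + 1) := by simp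
      _ ≤ ∑ i ∈ Finset.range k, (i + 1) := Finset.sum_le_sum_of_subset hsub
      _ = mm k := rfl
  obtain ⟨M, hM⟩ : ∃ M, mm k = M + 1 := ⟨mm k - 1, by omega⟩
  have harec : ∀ n, M + 1 ≤ n → (p n k : ZMod 2)
      = ∑ d ∈ Finset.Icc 1 (M + 1), (QP k).coeff d * (p (n - d) k : ZMod 2) := by
    intro n hn
    rw [← hM] at hn ⊢
    exact rec_mod2' k n hn (le_trans hmm hn)
  obtain ⟨T, hT, n0, hper⟩ := eventually_periodic_of_rec (M := M)
      (fun d => (QP k).coeff d) (fun n => (p n k : ZMod 2)) harec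
  apply density_exists (fun n => Odd (p n k)) T n0 hT
  intro n hn
  have h := hper n hn
  rw [ZMod.natCast_eq_natCast_iff'] at h
  rw [Nat.odd_iff, Nat.odd_iff, h]
end

section
/- There exist infinitely many positive integers k such that the odd density of p(·,k) is at most 2/3: for every positive integer K there exists k ≥ K with lim_{N→∞} #{n ≤ N : p(n,k) is odd}/N ≤ 2/3. -/
lemma part_le {n : ℕ} {P : n.Partition} {i : ℕ} (hi : i ∈ P.parts) : i ≤ n :=
  le_of_le_of_eq (Multiset.single_le_sum (fun x _ => Nat.zero_le x) _ hi) P.parts_sum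

-- p n k stable for n ≤ k
lemma p_stable {n k k' : ℕ} (hk : n ≤ k) (hk' : n ≤ k') : p n k = p n k' := by
  unfold p
  congr 1
  apply Finset.filter_congr
  intro Q _

  constructor <;> intro _ i hi <;> exact le_trans (part_le hi) (by omega)

def e (k n : ℕ) : ZMod 2 := (p n k : ZMod 2)

lemma e_rec (n k : ℕ) : e (k+1) (n + (k+1)) = e k (n + (k+1)) + e (k+1) n := by
  unfold e
  rw [p_rec]
  push_cast
  ring

lemma e_base {n k : ℕ} (h : n ≤ k) : e (k+1) n = e k n := by
  unfold e
  rw [p_stable (le_trans h (by omega)) h]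

lemma e_sum (k : ℕ) : ∀ n, e (k+1) n = ∑ j ∈ Finset.range (n/(k+1) + 1), e k (n - j*(k+1)) := by
  intro n
  induction n using Nat.strong_induction_on with
  | _ n ih =>
    rcases lt_or_ge n (k+1) with h | h
    · rw [Nat.div_eq_of_lt h]
      simp [e_base (by omega : n ≤ k)]
    · obtain ⟨m, rfl⟩ : ∃ m, n = m + (k+1) := ⟨n - (k+1), by omega⟩
      rw [e_rec, ih m (by omega)]
      have hdiv : (m + (k+1))/(k+1) = m/(k+1) + 1 := by
        rw [Nat.add_div_right _ (by omega)]
      rw [hdiv, Finset.sum_range_succ' (fun j => e k (m + (k+1) - j*(k+1))) (m/(k+1)+1)]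
      have : ∀ j, m + (k+1) - (j+1)*(k+1) = m - j*(k+1) := by
        intro j
        have : (j+1)*(k+1) = j*(k+1) + (k+1) := by ring
        rw [this]
        omega
      simp only [this, Nat.zero_mul, Nat.sub_zero]
      ring

lemma periodic_mul {k Q : ℕ} (hQ : ∀ n, e k (n + Q) = e k n) :
    ∀ m n, e k (n + m * Q) = e k n := by
  intro m
  induction m with
  | zero => simp
  | succ m ih => intro n; rw [Nat.succ_mul, ← Nat.add_assoc, hQ, ih]

lemma e_periodic : ∀ k, 1 ≤ k → ∃ Q, 0 < Q ∧ ∀ n, e k (n + Q) = e k n := by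
  intro k
  induction k with
  | zero => omega
  | succ k ih =>
    intro _
    rcases Nat.eq_zero_or_pos k with rfl | hk
    · exact ⟨1, by omega, fun n => by unfold e; rw [p_one, p_one]⟩
    obtain ⟨Q, hQpos, hQ⟩ := ih hk
    refine ⟨2 * Q * (k+1), by positivity, fun n => ?_⟩
    rw [e_sum, e_sum]
    have hdiv : (n + 2 * Q * (k+1))/(k+1) = n/(k+1) + 2*Q := by
      rw [Nat.add_mul_div_right _ _ (by omega : 0 < k+1)]
    rw [hdiv]
    have hsplit : n/(k+1) + 2*Q + 1 = 2*Q + (n/(k+1) + 1) := by ring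
    rw [hsplit, Finset.sum_range_add]
    have h2 : ∀ j ∈ Finset.range (n/(k+1) + 1),
        e k (n + 2*Q*(k+1) - (2*Q + j)*(k+1)) = e k (n - j*(k+1)) := by
      intro j _
      congr 1
      have : (2*Q + j)*(k+1) = j*(k+1) + 2*Q*(k+1) := by ring
      rw [this]
      omega
    rw [Finset.sum_congr rfl h2]
    have h1 : ∑ j ∈ Finset.range (2*Q), e k (n + 2*Q*(k+1) - j*(k+1)) = 0 := by
      have h2Q : (2*Q) = Q + Q := by ring
      rw [h2Q] at *
      rw [Finset.sum_range_add]
      have hpair : ∀ j ∈ Finset.range Q,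
          e k (n + (Q+Q)*(k+1) - j*(k+1)) = e k (n + (Q+Q)*(k+1) - (Q + j)*(k+1)) := by
        intro j hj
        rw [Finset.mem_range] at hj
        have hle : (Q + j)*(k+1) + (k+1) ≤ (Q+Q)*(k+1) := by
          have h1 : Q + j + 1 ≤ Q+Q := by omega
          calc (Q+j)*(k+1) + (k+1) = (Q+j+1)*(k+1) := by ring
          _ ≤ (Q+Q)*(k+1) := Nat.mul_le_mul_right _ h1
        have key : n + (Q+Q)*(k+1) - j*(k+1) = (n + (Q+Q)*(k+1) - (Q + j)*(k+1)) + (k+1)*Q := by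
          have h1 : (Q+j)*(k+1) = j*(k+1) + Q*(k+1) := by ring
          have h2 : (k+1)*Q = Q*(k+1) := by ring
          omega
        rw [key]
        exact periodic_mul hQ (k+1) (n + (Q+Q)*(k+1) - (Q + j)*(k+1))
      rw [Finset.sum_congr rfl hpair, ← Finset.sum_add_distrib]
      apply Finset.sum_eq_zero
      intro j _
      have : ∀ x : ZMod 2, x + x = 0 := by decide
      exact this _
    rw [h1, zero_add]

section Periodic
variable (a : ℕ → Prop) [DecidablePred a] (P : ℕ) (hP : 0 < P)
  (hper : ∀ n, a (n + P) ↔ a n)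

lemma window_card (hper : ∀ n, a (n + P) ↔ a n) (m : ℕ) :
    ((Finset.Ico m (m+P)).filter a).card = ((Finset.range P).filter a).card := by
  induction m with
  | zero => rw [Finset.range_eq_Ico]; norm_num
  | succ m ih =>
    rw [← ih]
    have e1 : Finset.Ico m (m+P+1) = insert (m+P) (Finset.Ico m (m+P)) :=
      (Finset.Ico_insert_right (by omega)).symm
    have e2 : Finset.Ico m (m+P+1) = insert m (Finset.Ico (m+1) (m+1+P)) := by
      rw [show m+P+1 = m+1+P from by omega, ← Finset.insert_Ico_add_one_left_eq_Ico (by omega)]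
    have key := congrArg (fun s => (s.filter a).card) (e1.symm.trans e2)
    simp only [Finset.filter_insert] at key
    by_cases hm : a m
    · have hmp : a (m+P) := (hper m).mpr hm
      rw [if_pos hm, if_pos hmp] at key
      rw [Finset.card_insert_of_notMem, Finset.card_insert_of_notMem] at key
      · omega
      · simp
      · simp only [Finset.mem_filter, Finset.mem_Ico]; omega
    · have hmp : ¬ a (m+P) := fun h => hm ((hper m).mp h)
      rw [if_neg hm, if_neg hmp] at key
      omega

lemma block_card (hper : ∀ n, a (n + P) ↔ a n) (q : ℕ) :
    ((Finset.range (q*P)).filter a).card = q * ((Finset.range P).filter a).card := by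
  induction q with
  | zero => simp
  | succ q ih =>
    have hr : Finset.range ((q+1)*P) = Finset.range (q*P) ∪ Finset.Ico (q*P) (q*P + P) := by
      rw [Finset.range_eq_Ico, Finset.range_eq_Ico,
        Finset.Ico_union_Ico_eq_Ico (Nat.zero_le _) (Nat.le_add_right _ _)]
      congr 1
      ring
    rw [hr, Finset.filter_union, Finset.card_union_of_disjoint, ih,
      window_card a P hper]
    · ring
    · refine Finset.disjoint_filter_filter ?_
      rw [Finset.range_eq_Ico]
      exact Finset.Ico_disjoint_Ico_consecutive 0 (q*P) (q*P+P)

lemma cnt_bounds (hP : 0 < P) (hper : ∀ n, a (n + P) ↔ a n) (N : ℕ) :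
    (N/P) * ((Finset.range P).filter a).card ≤ ((Finset.range (N+1)).filter a).card ∧
    ((Finset.range (N+1)).filter a).card ≤ (N/P) * ((Finset.range P).filter a).card + 2*P := by
  set c := ((Finset.range P).filter a).card with hc
  have hcP : c ≤ P := le_trans (Finset.card_filter_le _ _) (by simp)
  have mono : ∀ {m m'}, m ≤ m' →
      ((Finset.range m).filter a).card ≤ ((Finset.range m').filter a).card :=
    fun h => Finset.card_le_card (Finset.filter_subset_filter _ (Finset.range_subset_range.2 h))
  set q := N/P with hq
  have h1 : q * P ≤ N := Nat.div_mul_le_self N P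
  have h2 : N + 1 ≤ (q+1) * P := by
    have h3 := Nat.div_add_mod N P
    rw [← hq] at h3
    have h4 : N % P < P := Nat.mod_lt _ hP
    have h5 : (q+1)*P = P*q + P := by ring
    rw [h5]
    linarith
  constructor
  · calc q * c = ((Finset.range (q*P)).filter a).card := (block_card a P hper q).symm
    _ ≤ _ := mono (by omega)
  · calc ((Finset.range (N+1)).filter a).card
        ≤ ((Finset.range ((q+1)*P)).filter a).card := mono h2
    _ = (q+1) * c := block_card a P hper (q+1)
    _ ≤ q * c + 2*P := by nlinarith

lemma density_tendsto (hP : 0 < P) (hper : ∀ n, a (n + P) ↔ a n) :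
    Filter.Tendsto (fun N : ℕ => (((Finset.range (N+1)).filter a).card : ℝ) / N)
      Filter.atTop (nhds ((((Finset.range P).filter a).card : ℝ) / P)) := by
  set c := ((Finset.range P).filter a).card with hc
  have hcP : c ≤ P := le_trans (Finset.card_filter_le _ _) (by simp)
  have hPR : (0:ℝ) < P := by exact_mod_cast hP
  have key : ∀ N : ℕ, 1 ≤ N →
      (c:ℝ)/P - (2*P)/N ≤ (((Finset.range (N+1)).filter a).card : ℝ) / N ∧
      (((Finset.range (N+1)).filter a).card : ℝ) / N ≤ (c:ℝ)/P + (2*P)/N := by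
    intro N hN
    obtain ⟨hlo, hhi⟩ := cnt_bounds a P hP hper N
    set cnt := ((Finset.range (N+1)).filter a).card with hcnt
    set q := N/P with hq
    have h1 : q * P ≤ N := Nat.div_mul_le_self N P
    have h2 : N + 1 ≤ (q+1) * P := by
      have h3 := Nat.div_add_mod N P
      rw [← hq] at h3
      have h4 : N % P < P := Nat.mod_lt _ hP
      have h5 : (q+1)*P = P*q + P := by ring
      rw [h5]
      linarith
    have hNR : (0:ℝ) < N := by exact_mod_cast hN
    have hlo' : (q:ℝ) * c ≤ cnt := by exact_mod_cast hlo
    have hhi' : (cnt:ℝ) ≤ q * c + 2*P := by exact_mod_cast hhi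
    have h1' : (q:ℝ) * P ≤ N := by exact_mod_cast h1
    have h2' : (N:ℝ) + 1 ≤ (q+1) * P := by exact_mod_cast h2
    have hcP' : (c:ℝ) ≤ P := by exact_mod_cast hcP
    have hq0 : (0:ℝ) ≤ q := Nat.cast_nonneg q
    have hc0 : (0:ℝ) ≤ c := Nat.cast_nonneg c
    constructor
    · rw [div_sub_div _ _ (ne_of_gt hPR) (ne_of_gt hNR), div_le_div_iff₀ (by positivity) hNR]
      have A1 : (q:ℝ)*c*P ≤ cnt*P := by nlinarith
      have A2 : (c:ℝ)*N ≤ q*c*P + c*P := by nlinarith [mul_le_mul_of_nonneg_left h2' hc0]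
      have B : (c:ℝ)*N - P*(2*P) ≤ cnt*P := by nlinarith
      nlinarith [mul_le_mul_of_nonneg_right B (le_of_lt hNR)]
    · rw [div_add_div _ _ (ne_of_gt hPR) (ne_of_gt hNR), div_le_div_iff₀ hNR (by positivity)]
      have A3 : (q:ℝ)*c*P ≤ c*N := by nlinarith [mul_le_mul_of_nonneg_left h1' hc0]
      have B2 : (cnt:ℝ)*P ≤ c*N + P*(2*P) := by nlinarith
      nlinarith [mul_le_mul_of_nonneg_right B2 (le_of_lt hNR)]
  have hz : Filter.Tendsto (fun N : ℕ => ((2*P : ℕ):ℝ)/N) Filter.atTop (nhds 0) :=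
    tendsto_const_div_atTop_nhds_zero_nat _
  have hz' : Filter.Tendsto (fun N : ℕ => (2*(P:ℝ))/N) Filter.atTop (nhds 0) := by
    convert hz using 2
    push_cast
    ring
  refine tendsto_of_tendsto_of_tendsto_of_le_of_le'
    (g := fun N : ℕ => (c:ℝ)/P - (2*P)/N) (h := fun N : ℕ => (c:ℝ)/P + (2*P)/N)
    ?_ ?_ ?_ ?_
  · simpa using tendsto_const_nhds.sub hz'
  · simpa using tendsto_const_nhds.add hz'
  · filter_upwards [Filter.eventually_ge_atTop 1] with N hN
    exact (key N hN).1
  · filter_upwards [Filter.eventually_ge_atTop 1] with N hN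
    exact (key N hN).2

end Periodic

lemma odd_iff_e {n k : ℕ} : Odd (p n k) ↔ e k n = 1 := by
  have h0 : e k n = 0 ↔ (2 : ℕ) ∣ p n k := by
    unfold e
    exact ZMod.natCast_eq_zero_iff _ _
  have h1 : ∀ x : ZMod 2, x = 1 ↔ ¬ x = 0 := by decide
  rw [← Nat.not_even_iff_odd, even_iff_two_dvd, ← h0, h1]

set_option maxHeartbeats 2000000 in
theorem stmt_8 :
    ∀ K : ℕ, 0 < K → ∃ k : ℕ, K ≤ k ∧
      ∃ d : ℝ, d ≤ 2 / 3 ∧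
        Filter.Tendsto
          (fun N : ℕ =>
            (((Finset.range (N + 1)).filter (fun n => Odd (p n k))).card : ℝ) / N)
          Filter.atTop (nhds d) := by
  intro K hK
  obtain ⟨Q1, hQ1pos, hQ1⟩ := e_periodic K hK
  obtain ⟨Q2, hQ2pos, hQ2⟩ := e_periodic (K+1) (by omega)
  set P := Q1 * Q2 with hPdef
  have hPpos : 0 < P := Nat.mul_pos hQ1pos hQ2pos
  have hper1 : ∀ n, Odd (p n K) ↔ Odd (p (n + P) K) := by
    intro n
    rw [odd_iff_e, odd_iff_e]
    rw [show n + Q1*Q2 = n + Q2*Q1 from by ring, periodic_mul hQ1 Q2 n]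
  have hper2 : ∀ n, Odd (p n (K+1)) ↔ Odd (p (n + P) (K+1)) := by
    intro n
    rw [odd_iff_e, odd_iff_e, periodic_mul hQ2 Q1 n]
  set c1 := ((Finset.range P).filter (fun n => Odd (p n K))).card with hc1
  set c2 := ((Finset.range P).filter (fun n => Odd (p n (K+1)))).card with hc2
  by_cases hcase : 3 * c2 ≤ 2 * P
  · refine ⟨K+1, by omega, (c2 : ℝ)/P, ?_, ?_⟩
    · rw [div_le_div_iff₀ (by exact_mod_cast hPpos) (by norm_num)]
      have : (3 : ℝ) * c2 ≤ 2 * P := by exact_mod_cast hcase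
      linarith
    · exact density_tendsto _ P hPpos (fun n => (hper2 n).symm)
  · -- counting argument: 3 * c1 ≤ 2 * P
    refine ⟨K, le_refl K, (c1 : ℝ)/P, ?_, ?_⟩
    swap
    · exact density_tendsto _ P hPpos (fun n => (hper1 n).symm)
    have hrel : ∀ m : ℕ, Odd (p (m + (K+1)) K) ↔
        ¬ (Odd (p (m + (K+1)) (K+1)) ↔ Odd (p m (K+1))) := by
      intro m
      have hsum := p_rec m K
      rw [Nat.odd_iff, Nat.odd_iff, Nat.odd_iff, hsum, Nat.add_mod]
      have h1 := Nat.mod_two_eq_zero_or_one (p (m + (K+1)) K)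
      have h2 := Nat.mod_two_eq_zero_or_one (p m (K+1))
      rcases h1 with h1 | h1 <;> rcases h2 with h2 | h2 <;> rw [h1, h2] <;> simp
    set W := Finset.Ico (K+1) (K+1+P) with hW
    set A := W.filter (fun n => Odd (p n (K+1))) with hA
    set B := W.filter (fun n => Odd (p (n - (K+1)) (K+1))) with hB
    set C := W.filter (fun n => Odd (p n K)) with hCdef
    have hAcard : A.card = c2 := window_card _ P (fun n => (hper2 n).symm) (K+1)
    have hCcard : C.card = c1 := window_card _ P (fun n => (hper1 n).symm) (K+1)
    have hBcard : B.card = c2 := by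
      rw [hc2]
      apply Finset.card_bij (fun (n : ℕ) (_ : n ∈ B) => n - (K+1))
      · intro n hn
        rw [hB, Finset.mem_filter, hW, Finset.mem_Ico] at hn
        rw [Finset.mem_filter, Finset.mem_range]
        exact ⟨by omega, hn.2⟩
      · intro n1 h1 n2 h2 he
        rw [hB, Finset.mem_filter, hW, Finset.mem_Ico] at h1 h2
        omega
      · intro m hm
        rw [Finset.mem_filter, Finset.mem_range] at hm
        refine ⟨m + (K+1), ?_, by omega⟩
        rw [hB, Finset.mem_filter, hW, Finset.mem_Ico]
        refine ⟨⟨by omega, by omega⟩, ?_⟩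
        rw [Nat.add_sub_cancel]
        exact hm.2
    have hpoint : ∀ n, K+1 ≤ n → (Odd (p n K) ↔
        ((Odd (p n (K+1)) ∨ Odd (p (n-(K+1)) (K+1))) ∧
         ¬(Odd (p n (K+1)) ∧ Odd (p (n-(K+1)) (K+1))))) := by
      intro n hn
      obtain ⟨m, rfl⟩ : ∃ m, n = m + (K+1) := ⟨n - (K+1), by omega⟩
      rw [Nat.add_sub_cancel]
      rw [hrel m]
      tauto
    have hCeq : C = (A ∪ B) \ (A ∩ B) := by
      ext n
      rw [hCdef, hA, hB, Finset.mem_sdiff, Finset.mem_union, Finset.mem_inter,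
        Finset.mem_filter, Finset.mem_filter, Finset.mem_filter]
      constructor
      · rintro ⟨hnW, hodd⟩
        have h1 : K+1 ≤ n := by
          rw [hW, Finset.mem_Ico] at hnW
          omega
        have hp := (hpoint n h1).mp hodd
        exact ⟨by tauto, by tauto⟩
      · rintro ⟨hu, hni⟩
        have hnW : n ∈ W := by tauto
        have h1 : K+1 ≤ n := by
          rw [hW, Finset.mem_Ico] at hnW
          omega
        refine ⟨hnW, (hpoint n h1).mpr ?_⟩
        constructor
        · tauto
        · intro hb
          exact hni ⟨⟨hnW, hb.1⟩, ⟨hnW, hb.2⟩⟩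
    have hunion : (A ∪ B).card + (A ∩ B).card = A.card + B.card :=
      Finset.card_union_add_card_inter A B
    have hWle : (A ∪ B).card ≤ P := by
      refine le_trans (Finset.card_le_card
        (Finset.union_subset (Finset.filter_subset _ _) (Finset.filter_subset _ _))) ?_
      rw [hW, Nat.card_Ico]
      omega
    have hile : (A ∩ B).card ≤ (A ∪ B).card :=
      Finset.card_le_card (Finset.inter_subset_union)
    have hCc : C.card = (A ∪ B).card - (A ∩ B).card := by
      rw [hCeq, Finset.card_sdiff_of_subset Finset.inter_subset_union]
    have hkey : 3 * c1 ≤ 2 * P := by omega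
    rw [div_le_div_iff₀ (by exact_mod_cast hPpos) (by norm_num)]
    have : (3 : ℝ) * c1 ≤ 2 * P := by exact_mod_cast hkey
    linarith
end

section
/- For every integer k ≥ 2, there exist k(k+1)/2 − 1 consecutive even values of p(·,k): there exists a natural number i such that p(n, k) is even for all n with i ≤ n ≤ i + k(k+1)/2 − 2. -/
open PowerSeries Finset
open scoped Classical

noncomputable section AuxGF
variable {α : Type*}

/-- A convenience constructor for the power series whose coefficients indicate a subset. -/
def indicatorSeries (α : Type*) [Semiring α] (s : Set ℕ) : PowerSeries α :=
  PowerSeries.mk fun n => if n ∈ s then 1 else 0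

theorem coeff_indicator (s : Set ℕ) [Semiring α] (n : ℕ) :
    coeff n (indicatorSeries α s) = if n ∈ s then 1 else 0 :=
  coeff_mk _ _

theorem constantCoeff_indicator (s : Set ℕ) [Semiring α] :
    constantCoeff (indicatorSeries α s) = if 0 ∈ s then 1 else 0 :=
  rfl

theorem num_series' [Field α] (i : ℕ) :
    (1 - (X : PowerSeries α) ^ (i + 1))⁻¹ = indicatorSeries α {k | i + 1 ∣ k} := by
  rw [PowerSeries.inv_eq_iff_mul_eq_one]
  · ext n
    cases n with
    | zero => simp [mul_sub, zero_pow, constantCoeff_indicator]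
    | succ n =>
      simp only [coeff_one, if_false, mul_sub, mul_one, coeff_indicator,
        LinearMap.map_sub, reduceCtorEq]
      simp_rw [coeff_mul, coeff_X_pow, coeff_indicator, @boole_mul _ _ _ _]
      simp only [Set.mem_setOf_eq]; rw [sum_ite, sum_ite]
      simp_rw [@filter_filter _ _ _ _ _, sum_const_zero, add_zero, sum_const, nsmul_eq_mul, mul_one,
        sub_eq_iff_eq_add, zero_add]
      symm
      split_ifs with h
      · suffices #{a ∈ antidiagonal (n + 1) | i + 1 ∣ a.fst ∧ a.snd = i + 1} = 1 by
          convert congr_arg ((↑) : ℕ → α) this; norm_cast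
        rw [card_eq_one]
        cases' h with p hp
        refine ⟨((i + 1) * (p - 1), i + 1), ?_⟩
        ext ⟨a₁, a₂⟩
        simp only [mem_filter, Prod.mk.injEq, HasAntidiagonal.mem_antidiagonal, mem_singleton]
        constructor
        · rintro ⟨a_left, ⟨a, rfl⟩, rfl⟩
          refine ⟨?_, rfl⟩
          rw [Nat.mul_sub_left_distrib, ← hp, ← a_left, mul_one, Nat.add_sub_cancel]
        · rintro ⟨rfl, rfl⟩
          match p with
          | 0 => rw [mul_zero] at hp; cases hp
          | p + 1 => rw [hp]; simp [mul_add]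
      · suffices #{a ∈ antidiagonal (n + 1) | i + 1 ∣ a.fst ∧ a.snd = i + 1} = 0 by
          convert congr_arg ((↑) : ℕ → α) this; norm_cast
        rw [card_eq_zero]
        apply eq_empty_of_forall_notMem
        simp only [Prod.forall, mem_filter, not_and, HasAntidiagonal.mem_antidiagonal]
        rintro _ h₁ h₂ ⟨a, rfl⟩ rfl
        apply h
        simp [← h₂]
  · simp [zero_pow]

open Finset.HasAntidiagonal

-- The main workhorse (from the Mathlib archive).
theorem partialGF_prop (α : Type*) [CommSemiring α] (n : ℕ) (s : Finset ℕ) (hs : ∀ i ∈ s, 0 < i)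
    (c : ℕ → Set ℕ) (hc : ∀ i, i ∉ s → 0 ∈ c i) :
    #{p : n.Partition | (∀ j, p.parts.count j ∈ c j) ∧ ∀ j ∈ p.parts, j ∈ s} =
      coeff n (∏ i ∈ s, indicatorSeries α ((· * i) '' c i)) := by
  simp_rw [coeff_prod, coeff_indicator, prod_boole, sum_boole]
  apply congr_arg
  simp only [mem_univ, forall_true_left, not_and, not_forall, exists_prop,
    Set.mem_image, not_exists]
  set φ : (a : Nat.Partition n) →
    a ∈ filter (fun p ↦ (∀ (j : ℕ), Multiset.count j p.parts ∈ c j) ∧ ∀ j ∈ p.parts, j ∈ s) univ →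
    ℕ →₀ ℕ := fun p _ => {
      toFun := fun i => Multiset.count i p.parts • i
      support := Finset.filter (fun i => i ≠ 0) p.parts.toFinset
      mem_support_toFun := fun a => by
        simp only [smul_eq_mul, ne_eq, mul_eq_zero, Multiset.count_eq_zero]
        rw [not_or, not_not]
        simp only [Multiset.mem_toFinset, not_not, mem_filter] }
  refine Finset.card_bij φ ?_ ?_ ?_
  · intro a ha
    simp only [φ, not_forall, not_exists, not_and, exists_prop, mem_filter]
    rw [mem_finsuppAntidiag]
    dsimp only [ne_eq, smul_eq_mul, id_eq, eq_mpr_eq_cast, le_eq_subset, Finsupp.coe_mk]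
    simp only [mem_univ, forall_true_left, not_and, not_forall, exists_prop,
      mem_filter, true_and] at ha
    refine ⟨⟨?_, fun i ↦ ?_⟩, fun i _ ↦ ⟨a.parts.count i, ha.1 i, rfl⟩⟩
    · conv_rhs => simp [← a.parts_sum]
      rw [sum_multiset_count_of_subset _ s]
      · simp only [smul_eq_mul]
      · intro i
        simp only [Multiset.mem_toFinset, not_not, mem_filter]
        apply ha.2
    · simp only [ne_eq, Multiset.mem_toFinset, not_not, mem_filter, and_imp]
      exact fun hi _ ↦ ha.2 i hi
  · intro p₁ hp₁ p₂ hp₂ h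
    apply Nat.Partition.ext
    simp only [true_and, mem_univ, mem_filter] at hp₁ hp₂
    ext i
    simp only [φ, ne_eq, Multiset.mem_toFinset, not_not, smul_eq_mul, Finsupp.mk.injEq] at h
    by_cases hi : i = 0
    · rw [hi]
      rw [Multiset.count_eq_zero_of_notMem]
      · rw [Multiset.count_eq_zero_of_notMem]
        intro a; exact Nat.lt_irrefl 0 (hs 0 (hp₂.2 0 a))
      intro a; exact Nat.lt_irrefl 0 (hs 0 (hp₁.2 0 a))
    · rw [← mul_left_inj' hi]
      rw [funext_iff] at h
      exact h.2 i
  · simp only [φ, mem_filter, mem_finsuppAntidiag, mem_univ, exists_prop, true_and, and_assoc]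
    rintro f ⟨hf, hf₃, hf₄⟩
    have hf' : f ∈ finsuppAntidiag s n := mem_finsuppAntidiag.mpr ⟨hf, hf₃⟩
    simp only [mem_finsuppAntidiag] at hf'
    refine ⟨⟨∑ i ∈ s, Multiset.replicate (f i / i) i, ?_, ?_⟩, ?_, ?_, ?_⟩
    · intro i hi
      simp only [exists_prop, Multiset.mem_sum, mem_map, Function.Embedding.coeFn_mk] at hi
      rcases hi with ⟨t, ht, z⟩
      apply hs
      rwa [Multiset.eq_of_mem_replicate z]
    · simp_rw [Multiset.sum_sum, Multiset.sum_replicate, Nat.nsmul_eq_mul]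
      rw [← hf'.1]
      refine sum_congr rfl fun i hi => Nat.div_mul_cancel ?_
      rcases hf₄ i hi with ⟨w, _, hw₂⟩
      rw [← hw₂]
      exact dvd_mul_left _ _
    · intro i
      simp_rw [Multiset.count_sum', Multiset.count_replicate, sum_ite_eq']
      split_ifs with h
      · rcases hf₄ i h with ⟨w, hw₁, hw₂⟩
        rwa [← hw₂, Nat.mul_div_cancel _ (hs i h)]
      · exact hc _ h
    · intro i hi
      rw [Multiset.mem_sum] at hi
      rcases hi with ⟨j, hj₁, hj₂⟩
      rwa [Multiset.eq_of_mem_replicate hj₂]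
    · ext i
      simp_rw [Multiset.count_sum', Multiset.count_replicate, sum_ite_eq']
      simp only [ne_eq, Multiset.mem_toFinset, not_not, smul_eq_mul, ite_mul,
        zero_mul, Finsupp.coe_mk]
      split_ifs with h
      · apply Nat.div_mul_cancel
        rcases hf₄ i h with ⟨w, _, hw₂⟩
        apply Dvd.intro_left _ hw₂
      · apply symm
        rw [← Finsupp.notMem_support_iff]
        exact notMem_mono hf'.2 h

end AuxGF

noncomputable section

lemma coeff_GF (k n : ℕ) :
    ((p n k : ZMod 2)) =
      (coeff n) (∏ j ∈ range k, (1 - (X : PowerSeries (ZMod 2)) ^ (j + 1))⁻¹) := by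
  have hs : ∀ i ∈ (range k).map ⟨Nat.succ, Nat.succ_injective⟩, 0 < i := by
    simp only [mem_map, Function.Embedding.coeFn_mk]
    rintro i ⟨a, -, rfl⟩; exact Nat.succ_pos _
  have h := partialGF_prop (ZMod 2) n ((range k).map ⟨Nat.succ, Nat.succ_injective⟩) hs
    (fun _ => Set.univ) (fun _ _ => trivial)
  rw [Finset.prod_map] at h
  have hprod : ∀ j ∈ range k,
      indicatorSeries (ZMod 2) ((· * ((⟨Nat.succ, Nat.succ_injective⟩ : ℕ ↪ ℕ) j)) '' Set.univ)
        = (1 - (X : PowerSeries (ZMod 2)) ^ (j + 1))⁻¹ := by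
    intro j _
    have hset : ((· * ((⟨Nat.succ, Nat.succ_injective⟩ : ℕ ↪ ℕ) j)) '' Set.univ)
        = {m | j + 1 ∣ m} := by
      ext m
      simp only [Function.Embedding.coeFn_mk, Set.mem_image, Set.mem_univ, true_and,
        Set.mem_setOf_eq]
      constructor
      · rintro ⟨a, rfl⟩; exact Dvd.intro_left a rfl
      · rintro ⟨a, rfl⟩; exact ⟨a, mul_comm _ _⟩
    rw [hset, num_series']
  rw [Finset.prod_congr rfl hprod] at h
  rw [← h]
  unfold p
  refine congrArg (fun m : ℕ => (m : ZMod 2)) (congrArg Finset.card ?_)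
  ext P
  simp only [mem_filter, mem_univ, true_and, Set.mem_univ, forall_const, true_and, mem_map,
    mem_range, Function.Embedding.coeFn_mk]
  constructor
  · intro hP j hj
    have hpos : 0 < j := P.parts_pos hj
    have hle := hP j hj
    exact ⟨j - 1, by omega, by omega⟩
  · rintro hP i hi
    obtain ⟨a, ha, rfl⟩ := hP i hi
    omega

lemma sum_range_succ_eq' (k : ℕ) : ∑ j ∈ range k, (j + 1) = k * (k + 1) / 2 := by
  induction k with
  | zero => simp
  | succ m ih =>
    rw [Finset.sum_range_succ, ih]
    have h1 : 2 ∣ m * (m+1) := (Nat.even_mul_succ_self m).two_dvd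
    have h2 : 2 ∣ (m+1) * (m+1+1) := (Nat.even_mul_succ_self (m+1)).two_dvd
    have h3 : (m+1)*(m+1+1) = m*(m+1) + 2*(m+1) := by ring
    omega

lemma poly_dvd (k : ℕ) :
    (∏ j ∈ range k, (1 - Polynomial.X ^ (j + 1) : Polynomial (ZMod 2))) ∣
      Polynomial.X ^ (Nat.factorial k * 2 ^ k) - 1 := by
  set L := Nat.factorial k
  have h1 : (∏ j ∈ range k, (1 - Polynomial.X ^ (j + 1) : Polynomial (ZMod 2))) ∣
      (Polynomial.X ^ L - 1 : Polynomial (ZMod 2)) ^ k := by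
    have := Finset.prod_dvd_prod_of_dvd (s := range k)
      (fun j => (1 - Polynomial.X ^ (j + 1) : Polynomial (ZMod 2)))
      (fun _ => (Polynomial.X ^ L - 1 : Polynomial (ZMod 2))) ?_
    · simpa [Finset.prod_const, card_range] using this
    · intro j hj
      have hjd : (j + 1) ∣ L := Nat.dvd_factorial (Nat.succ_pos j) (mem_range.mp hj)
      obtain ⟨m, hm⟩ := hjd
      have h2 : (Polynomial.X ^ (j+1) - 1 : Polynomial (ZMod 2)) ∣ Polynomial.X ^ L - 1 := by
        rw [hm, pow_mul]
        simpa using sub_dvd_pow_sub_pow (Polynomial.X ^ (j+1) : Polynomial (ZMod 2)) 1 m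
      show (1 - Polynomial.X ^ (j+1) : Polynomial (ZMod 2)) ∣ Polynomial.X ^ L - 1
      have heq : (1 - Polynomial.X ^ (j+1) : Polynomial (ZMod 2)) = -(Polynomial.X ^ (j+1) - 1) := by
        ring
      rw [heq]
      exact (neg_dvd).mpr h2
  have h2 : ((Polynomial.X ^ L - 1 : Polynomial (ZMod 2)) ^ k) ∣
      (Polynomial.X ^ L - 1 : Polynomial (ZMod 2)) ^ (2 ^ k) :=
    pow_dvd_pow _ (Nat.lt_two_pow_self (n := k)).le
  have h3 : (Polynomial.X ^ L - 1 : Polynomial (ZMod 2)) ^ (2 ^ k) =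
      Polynomial.X ^ (L * 2 ^ k) - 1 := by
    rw [sub_pow_char_pow, ← pow_mul, one_pow]
  exact h3 ▸ h1.trans h2

theorem stmt_9 (k : ℕ) (hk : 2 ≤ k) :
    ∃ i : ℕ, ∀ n : ℕ, i ≤ n → n ≤ i + k * (k + 1) / 2 - 2 → Even (p n k) := by
  set S := k * (k + 1) / 2 with hSdef
  set N := Nat.factorial k * 2 ^ k with hNdef
  -- basic inequalities
  have hS3 : 3 ≤ S := by
    have h6 : 2 * 3 ≤ k * (k + 1) := Nat.mul_le_mul hk (by omega)
    omega
  have hSN : S ≤ N := by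
    have h1 : k ≤ Nat.factorial k := Nat.self_le_factorial k
    have h2 : k + 1 ≤ 2 ^ k := Nat.lt_two_pow_self
    have h3 : k * (k + 1) ≤ N := Nat.mul_le_mul h1 h2
    have h4 : S ≤ k * (k + 1) := Nat.div_le_self _ _
    omega
  -- the polynomial quotient G
  obtain ⟨G, hG⟩ := poly_dvd k
  set D : Polynomial (ZMod 2) := ∏ j ∈ range k, (1 - Polynomial.X ^ (j + 1)) with hDdef
  have hDfac_ne : ∀ j ∈ range k, (1 - Polynomial.X ^ (j + 1) : Polynomial (ZMod 2)) ≠ 0 := by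
    intro j _
    have : (1 - Polynomial.X ^ (j+1) : Polynomial (ZMod 2)) = -(Polynomial.X ^ (j+1) - Polynomial.C 1) := by
      rw [Polynomial.C_1]; ring
    rw [this, neg_ne_zero]
    exact Polynomial.X_pow_sub_C_ne_zero (Nat.succ_pos j) 1
  have hDdeg : D.natDegree = S := by
    rw [hDdef, Polynomial.natDegree_prod _ _ hDfac_ne]
    rw [Finset.sum_congr rfl (fun j _ => ?_), sum_range_succ_eq' k]
    have : (1 - Polynomial.X ^ (j+1) : Polynomial (ZMod 2)) = -(Polynomial.X ^ (j+1) - Polynomial.C 1) := by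
      rw [Polynomial.C_1]; ring
    rw [this, Polynomial.natDegree_neg, Polynomial.natDegree_X_pow_sub_C]
  have hXN : (Polynomial.X ^ N - 1 : Polynomial (ZMod 2)).natDegree = N := by
    have : (Polynomial.X ^ N - 1 : Polynomial (ZMod 2)) = Polynomial.X ^ N - Polynomial.C 1 := by
      simp [Polynomial.C_1]
    rw [this, Polynomial.natDegree_X_pow_sub_C]
  have hXN_ne : (Polynomial.X ^ N - 1 : Polynomial (ZMod 2)) ≠ 0 := by
    have : (Polynomial.X ^ N - 1 : Polynomial (ZMod 2)) = Polynomial.X ^ N - Polynomial.C 1 := by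
      simp [Polynomial.C_1]
    rw [this]
    exact Polynomial.X_pow_sub_C_ne_zero (by positivity) 1
  have hD_ne : D ≠ 0 := Finset.prod_ne_zero_iff.mpr hDfac_ne
  have hG_ne : G ≠ 0 := by
    rintro rfl
    rw [mul_zero] at hG
    exact hXN_ne hG
  have hGdeg : G.natDegree = N - S := by
    have := congrArg Polynomial.natDegree hG
    rw [hXN, Polynomial.natDegree_mul hD_ne hG_ne, hDdeg] at this
    omega
  -- move to power series
  set F : PowerSeries (ZMod 2) := ∏ j ∈ range k, (1 - (X : PowerSeries (ZMod 2)) ^ (j + 1))⁻¹ with hFdef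
  have hFD : F * (D : PowerSeries (ZMod 2)) = 1 := by
    rw [hDdef, ← Polynomial.coeToPowerSeries.ringHom_apply, map_prod, hFdef,
      ← Finset.prod_mul_distrib]
    rw [Finset.prod_congr rfl (fun j _ => ?_)]
    · exact Finset.prod_const_one
    · simp only [map_sub, map_one, map_pow, Polynomial.coeToPowerSeries.ringHom_apply,
        Polynomial.coe_X]
      exact PowerSeries.inv_mul_cancel _ (by simp)
  have hkey : ∀ n < N, (coeff n) F = -(G.coeff n) := by
    intro n hn
    have hcast : ((X : PowerSeries (ZMod 2)) ^ N - 1) = (D : PowerSeries (ZMod 2)) * (G : PowerSeries (ZMod 2)) := by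
      have := congrArg (Polynomial.coeToPowerSeries.ringHom (R := ZMod 2)) hG
      simpa [map_sub, map_pow, map_mul, Polynomial.coe_X] using this
    have hmul : F * ((X : PowerSeries (ZMod 2)) ^ N - 1) = (G : PowerSeries (ZMod 2)) := by
      rw [hcast, ← mul_assoc, hFD, one_mul]
    have := congrArg (coeff (R := ZMod 2) n) hmul
    rw [mul_sub, mul_one, map_sub, PowerSeries.coeff_mul_X_pow', if_neg (by omega)] at this
    rw [Polynomial.coeff_coe, zero_sub, neg_eq_iff_eq_neg] at this
    exact this
  refine ⟨N - S + 1, fun n hn1 hn2 => ?_⟩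
  have hn3 : n < N := by omega
  have hzero : G.coeff n = 0 :=
    Polynomial.coeff_eq_zero_of_natDegree_lt (by rw [hGdeg]; omega)
  have hfin := hkey n hn3
  rw [hzero, neg_zero, hFdef, ← coeff_GF k n] at hfin
  rw [Nat.even_iff]
  have hdvd := (ZMod.natCast_eq_zero_iff (p n k) 2).mp hfin
  omega

end
end
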